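/- Let K be a field and X ⊆ K a subset. Then either S = {(y − y')/(x' − x) : x, y, x', y' ∈ X, x ≠ x'} equals all of K, or there exists a ∈ K such that the map (x, y) ↦ a·x + y is injective on X × X. -/
import Mathlib


theorem stmt3 (K : Type*) [Field K] (X : Set K) :
    {s : K | ∃ x ∈ X, ∃ y ∈ X, ∃ x' ∈ X, ∃ y' ∈ X, x ≠ x' ∧ s = (y - y') / (x' - x)}
      = Set.univ ∨
    ∃ a : K, Set.InjOn (fun z : K × K => a * z.1 + z.2) (X ×ˢ X) := by
  set S := {s : K | ∃ x ∈ X, ∃ y ∈ X, ∃ x' ∈ X, ∃ y' ∈ X, x ≠ x' ∧ s = (y - y') / (x' - x)}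
  by_cases h : S = Set.univ
  · exact Or.inl h
  · right
    obtain ⟨a, ha⟩ : ∃ a : K, a ∉ S := by
      by_contra hc
      push_neg at hc
      exact h (Set.eq_univ_of_forall hc)
    refine ⟨a, ?_⟩
    rintro ⟨x, y⟩ ⟨hx, hy⟩ ⟨x', y'⟩ ⟨hx', hy'⟩ heq
    simp only at heq hx hy hx' hy'
    by_cases hxx : x = x'
    · subst hxx
      have : y = y' := by linear_combination heq
      simp [this]
    · exfalso
      apply ha
      refine ⟨x, hx, y, hy, x', hx', y', hy', hxx, ?_⟩
      have hne : x' - x ≠ 0 := sub_ne_zero.mpr (Ne.symm hxx)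
      field_simp
      linear_combination (-1 : K) * heq
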